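/- Let Y ∈ 𝒜 be symmetric (Y* = Y) for the reflection involution. Then there is α ∈ F such that Q₁ Y Q₂ = α Q₁ Q₂ for all Q₁, Q₂ ∈ 𝒜 of the block form Qᵢ = (αᵢ e₁₂, Θᵢ; 0, βᵢ e₁₂) with αᵢ, βᵢ ∈ F and Θᵢ ∈ UT₂(F). -/

import Mathlib

open Matrix

/-- The 4×4 antidiagonal permutation matrix. -/
def J4 (F : Type*) [Field F] : Matrix (Fin 4) (Fin 4) F :=
  Matrix.of fun i j => if (i : ℕ) + (j : ℕ) = 3 then 1 else 0

/-- The reflection involution A ↦ J Aᵀ J on 4×4 matrices. -/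
def reflInv {F : Type*} [Field F] (A : Matrix (Fin 4) (Fin 4) F) : Matrix (Fin 4) (Fin 4) F :=
  J4 F * Aᵀ * J4 F

/-- Upper triangular 4×4 matrices. -/
def UT4 {F : Type*} [Field F] (A : Matrix (Fin 4) (Fin 4) F) : Prop :=
  A.BlockTriangular (id : Fin 4 → Fin 4)

/-- The subalgebra 𝒜: upper triangular with (2,3) entry (zero-indexed (1,2)) equal to zero. -/
def memA {F : Type*} [Field F] (A : Matrix (Fin 4) (Fin 4) F) : Prop :=
  UT4 A ∧ A 1 2 = 0

/-- The block form Q = (α e₁₂, Θ; 0, β e₁₂) with Θ ∈ UT₂(F), written entrywise. -/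
def QForm {F : Type*} [Field F] (Q : Matrix (Fin 4) (Fin 4) F) : Prop :=
  UT4 Q ∧ Q 0 0 = 0 ∧ Q 1 1 = 0 ∧ Q 2 2 = 0 ∧ Q 3 3 = 0 ∧ Q 1 2 = 0

theorem symmetric_Y_scalar_action {F : Type*} [Field F]
    (Y : Matrix (Fin 4) (Fin 4) F) (hY : memA Y) (hYs : reflInv Y = Y) :
    ∃ α : F, ∀ Q₁ Q₂ : Matrix (Fin 4) (Fin 4) F,
      QForm Q₁ → QForm Q₂ → Q₁ * Y * Q₂ = α • (Q₁ * Q₂) := by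

  obtain ⟨hYut, hY12⟩ := hY
  have hY11 : Y 1 1 = Y 2 2 := by
    have := congrFun (congrFun hYs 1) 1
    simp [reflInv, J4, Matrix.mul_apply, Fin.sum_univ_four] at this
    exact this.symm
  refine ⟨Y 1 1, fun Q₁ Q₂ hQ₁ hQ₂ => ?_⟩
  obtain ⟨h1ut, h100, h111, h122, h133, h112⟩ := hQ₁
  obtain ⟨h2ut, h200, h211, h222, h233, h212⟩ := hQ₂
  have l1 : ∀ i j : Fin 4, j < i → Q₁ i j = 0 := fun i j h => h1ut h
  have l2 : ∀ i j : Fin 4, j < i → Q₂ i j = 0 := fun i j h => h2ut h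
  have lY : ∀ i j : Fin 4, j < i → Y i j = 0 := fun i j h => hYut h
  ext i j
  fin_cases i <;> fin_cases j <;>
    simp [Matrix.mul_apply, Fin.sum_univ_four, h100, h111, h122, h133, h112,
      h200, h211, h222, h233, h212, hY12,
      l1 1 0 (by decide), l1 2 0 (by decide), l1 2 1 (by decide),
      l1 3 0 (by decide), l1 3 1 (by decide), l1 3 2 (by decide),
      l2 1 0 (by decide), l2 2 0 (by decide), l2 2 1 (by decide),
      l2 3 0 (by decide), l2 3 1 (by decide), l2 3 2 (by decide),
      lY 1 0 (by decide), lY 2 0 (by decide), lY 2 1 (by decide),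
      lY 3 0 (by decide), lY 3 1 (by decide), lY 3 2 (by decide)] <;>
    ring_nf <;> rw [hY11] <;> ring
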